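/- The polynomials p1, p2, p3, p4, p5, p6, p7 defined in the context are linearly independent over ℂ in ℂ[h1,h2], and the polynomial p8 defined in the context lies in the ℂ-linear span of p1,…,p7 (equivalently, the family {p1,…,p8} is linearly dependent over ℂ). -/

import Mathlib

open MvPolynomial

/- Polynomials in `ℂ[h1, h2]` (with `h1 = X 0`, `h2 = X 1`): the Harish–Chandra
projections of eight explicit zero-weight vectors in the submodule of `U(G₂)` generated,
under the left-adjoint action, by the image in the Zhu algebra of the conformal-weight-6
singular vector of `V^{-2}(G₂)`. -/

noncomputable def PG1 : MvPolynomial (Fin 2) ℂ :=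
  let h1 := (X 0 : MvPolynomial (Fin 2) ℂ); let h2 := (X 1 : MvPolynomial (Fin 2) ℂ);
  -24*(2*h1 + 3*h2 + 3)*(8*h1^5 + 60*h2*h1^4 + 36*h1^4 + 178*h2^2*h1^3 + 212*h2*h1^3 +
    24*h1^3 + 261*h2^3*h1^2 + 438*h2^2*h1^2 + 48*h2*h1^2 - 44*h1^2 + 189*h2^4*h1 +
    369*h2^3*h1 - 28*h2^2*h1 - 152*h2*h1 - 24*h1 + 54*h2^5 + 108*h2^4 - 42*h2^3 -
    96*h2^2 - 24*h2)

noncomputable def PG2 : MvPolynomial (Fin 2) ℂ :=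
  let h1 := (X 0 : MvPolynomial (Fin 2) ℂ); let h2 := (X 1 : MvPolynomial (Fin 2) ℂ);
  2*(32*h1^6 + 294*h2*h1^5 + 192*h1^5 + 1081*h2^2*h1^4 + 1398*h2*h1^4 + 312*h1^4 +
    2070*h2^3*h1^3 + 3928*h2^2*h1^3 + 1542*h2*h1^3 - 32*h1^3 + 2223*h2^4*h1^2 +
    5346*h2^3*h1^2 + 2557*h2^2*h1^2 - 630*h2*h1^2 - 360*h1^2 + 1296*h2^5*h1 +
    3582*h2^4*h1 + 1656*h2^3*h1 - 1554*h2^2*h1 - 1164*h2*h1 - 144*h1 + 324*h2^6 +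
    972*h2^5 + 396*h2^4 - 828*h2^3 - 720*h2^2 - 144*h2)

noncomputable def PG3 : MvPolynomial (Fin 2) ℂ :=
  let h1 := (X 0 : MvPolynomial (Fin 2) ℂ); let h2 := (X 1 : MvPolynomial (Fin 2) ℂ);
  -4*(16*h1^6 + 161*h2*h1^5 + 96*h1^5 + 634*h2^2*h1^4 + 763*h2*h1^4 + 156*h1^4 +
    1254*h2^3*h1^3 + 2260*h2^2*h1^3 + 865*h2*h1^3 - 16*h1^3 + 1332*h2^4*h1^2 +
    3123*h2^3*h1^2 + 1558*h2^2*h1^2 - 271*h2*h1^2 - 180*h1^2 + 729*h2^5*h1 +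
    2016*h2^4*h1 + 1041*h2^3*h1 - 708*h2^2*h1 - 582*h2*h1 - 72*h1 + 162*h2^6 +
    486*h2^5 + 198*h2^4 - 414*h2^3 - 360*h2^2 - 72*h2)

noncomputable def PG4 : MvPolynomial (Fin 2) ℂ :=
  let h1 := (X 0 : MvPolynomial (Fin 2) ℂ); let h2 := (X 1 : MvPolynomial (Fin 2) ℂ);
  6*h1*h2*(h1 + h2 + 1)*(h1 + 2*h2 + 2)*(h1 + 3*h2 + 3)*(2*h1 + 3*h2)

noncomputable def PG5 : MvPolynomial (Fin 2) ℂ :=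
  let h1 := (X 0 : MvPolynomial (Fin 2) ℂ); let h2 := (X 1 : MvPolynomial (Fin 2) ℂ);
  2*h1*(h1 + 2*h2 + 2)*(32*h1^4 + 218*h2*h1^3 + 128*h1^3 + 555*h2^2*h1^2 + 614*h2*h1^2 +
    56*h1^2 + 612*h2^3*h1 + 882*h2^2*h1 - 10*h2*h1 - 144*h1 + 243*h2^4 + 360*h2^3 -
    249*h2^2 - 390*h2 - 72)

noncomputable def PG6 : MvPolynomial (Fin 2) ℂ :=
  let h1 := (X 0 : MvPolynomial (Fin 2) ℂ); let h2 := (X 1 : MvPolynomial (Fin 2) ℂ);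
  -2*h1*(h1 + 2*h2 + 2)*(16*h1^4 + 109*h2*h1^3 + 64*h1^3 + 264*h2^2*h1^2 + 289*h2*h1^2 +
    28*h1^2 + 279*h2^3*h1 + 396*h2^2*h1 - 17*h2*h1 - 72*h1 + 108*h2^4 + 153*h2^3 -
    132*h2^2 - 189*h2 - 36)

noncomputable def PG7 : MvPolynomial (Fin 2) ℂ :=
  let h1 := (X 0 : MvPolynomial (Fin 2) ℂ); let h2 := (X 1 : MvPolynomial (Fin 2) ℂ);
  -4*(h1 - 1)*h1*(h1 + 2*h2 + 2)*(h1 + 2*h2 + 3)*(16*h1^2 + 63*h2*h1 + 32*h1 + 63*h2^2 +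
    63*h2 + 12)

noncomputable def PG8 : MvPolynomial (Fin 2) ℂ :=
  let h1 := (X 0 : MvPolynomial (Fin 2) ℂ); let h2 := (X 1 : MvPolynomial (Fin 2) ℂ);
  6*(64*h1^6 + 534*h2*h1^5 + 384*h1^5 + 1829*h2^2*h1^4 + 2556*h2*h1^4 + 624*h1^4 +
    3168*h2^3*h1^3 + 6210*h2^2*h1^3 + 2594*h2*h1^3 - 64*h1^3 + 2727*h2^4*h1^2 +
    6426*h2^3*h1^2 + 2863*h2^2*h1^2 - 1412*h2*h1^2 - 720*h1^2 + 918*h2^5*h1 +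
    2322*h2^4*h1 + 402*h2^3*h1 - 2538*h2^2*h1 - 1824*h2*h1 - 288*h1)

-- evaluation lemmas
private lemma ev01 : eval (![3,1] : Fin 2 → ℂ) PG1 = -8146656 := by
  simp only [PG1]
  simp only [map_mul, map_add, map_sub, map_neg, map_ofNat, map_pow, eval_X,
    Matrix.cons_val_zero, Matrix.cons_val_one, Matrix.head_cons]
  norm_num

private lemma ev02 : eval (![3,1] : Fin 2 → ℂ) PG2 = 1326906 := by
  simp only [PG2]
  simp only [map_mul, map_add, map_sub, map_neg, map_ofNat, map_pow, eval_X,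
    Matrix.cons_val_zero, Matrix.cons_val_one, Matrix.head_cons]
  norm_num

private lemma ev03 : eval (![3,1] : Fin 2 → ℂ) PG3 = -1500156 := by
  simp only [PG3]
  simp only [map_mul, map_add, map_sub, map_neg, map_ofNat, map_pow, eval_X,
    Matrix.cons_val_zero, Matrix.cons_val_one, Matrix.head_cons]
  norm_num

private lemma ev04 : eval (![3,1] : Fin 2 → ℂ) PG4 = 51030 := by
  simp only [PG4]
  simp only [map_mul, map_add, map_sub, map_neg, map_ofNat, map_pow, eval_X,
    Matrix.cons_val_zero, Matrix.cons_val_one, Matrix.head_cons]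
  norm_num

private lemma ev05 : eval (![3,1] : Fin 2 → ℂ) PG5 = 1128582 := by
  simp only [PG5]
  simp only [map_mul, map_add, map_sub, map_neg, map_ofNat, map_pow, eval_X,
    Matrix.cons_val_zero, Matrix.cons_val_one, Matrix.head_cons]
  norm_num

private lemma ev06 : eval (![3,1] : Fin 2 → ℂ) PG6 = -540036 := by
  simp only [PG6]
  simp only [map_mul, map_add, map_sub, map_neg, map_ofNat, map_pow, eval_X,
    Matrix.cons_val_zero, Matrix.cons_val_one, Matrix.head_cons]
  norm_num

private lemma ev07 : eval (![3,1] : Fin 2 → ℂ) PG7 = -762048 := by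
  simp only [PG7]
  simp only [map_mul, map_add, map_sub, map_neg, map_ofNat, map_pow, eval_X,
    Matrix.cons_val_zero, Matrix.cons_val_one, Matrix.head_cons]
  norm_num

private lemma ev11 : eval (![-1,-3] : Fin 2 → ℂ) PG1 = -2686656 := by
  simp only [PG1]
  simp only [map_mul, map_add, map_sub, map_neg, map_ofNat, map_pow, eval_X,
    Matrix.cons_val_zero, Matrix.cons_val_one, Matrix.head_cons]
  norm_num

private lemma ev12 : eval (![-1,-3] : Fin 2 → ℂ) PG2 = 441098 := by
  simp only [PG2]
  simp only [map_mul, map_add, map_sub, map_neg, map_ofNat, map_pow, eval_X,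
    Matrix.cons_val_zero, Matrix.cons_val_one, Matrix.head_cons]
  norm_num

private lemma ev13 : eval (![-1,-3] : Fin 2 → ℂ) PG3 = -516716 := by
  simp only [PG3]
  simp only [map_mul, map_add, map_sub, map_neg, map_ofNat, map_pow, eval_X,
    Matrix.cons_val_zero, Matrix.cons_val_one, Matrix.head_cons]
  norm_num

private lemma ev14 : eval (![-1,-3] : Fin 2 → ℂ) PG4 = 20790 := by
  simp only [PG4]
  simp only [map_mul, map_add, map_sub, map_neg, map_ofNat, map_pow, eval_X,
    Matrix.cons_val_zero, Matrix.cons_val_one, Matrix.head_cons]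
  norm_num

private lemma ev15 : eval (![-1,-3] : Fin 2 → ℂ) PG5 = 212870 := by
  simp only [PG5]
  simp only [map_mul, map_add, map_sub, map_neg, map_ofNat, map_pow, eval_X,
    Matrix.cons_val_zero, Matrix.cons_val_one, Matrix.head_cons]
  norm_num

private lemma ev16 : eval (![-1,-3] : Fin 2 → ℂ) PG6 = -97660 := by
  simp only [PG6]
  simp only [map_mul, map_add, map_sub, map_neg, map_ofNat, map_pow, eval_X,
    Matrix.cons_val_zero, Matrix.cons_val_one, Matrix.head_cons]
  norm_num

private lemma ev17 : eval (![-1,-3] : Fin 2 → ℂ) PG7 = -90080 := by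
  simp only [PG7]
  simp only [map_mul, map_add, map_sub, map_neg, map_ofNat, map_pow, eval_X,
    Matrix.cons_val_zero, Matrix.cons_val_one, Matrix.head_cons]
  norm_num

private lemma ev21 : eval (![2,-1] : Fin 2 → ℂ) PG1 = 384 := by
  simp only [PG1]
  simp only [map_mul, map_add, map_sub, map_neg, map_ofNat, map_pow, eval_X,
    Matrix.cons_val_zero, Matrix.cons_val_one, Matrix.head_cons]
  norm_num

private lemma ev22 : eval (![2,-1] : Fin 2 → ℂ) PG2 = -32 := by
  simp only [PG2]
  simp only [map_mul, map_add, map_sub, map_neg, map_ofNat, map_pow, eval_X,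
    Matrix.cons_val_zero, Matrix.cons_val_one, Matrix.head_cons]
  norm_num

private lemma ev23 : eval (![2,-1] : Fin 2 → ℂ) PG3 = 384 := by
  simp only [PG3]
  simp only [map_mul, map_add, map_sub, map_neg, map_ofNat, map_pow, eval_X,
    Matrix.cons_val_zero, Matrix.cons_val_one, Matrix.head_cons]
  norm_num

private lemma ev24 : eval (![2,-1] : Fin 2 → ℂ) PG4 = -96 := by
  simp only [PG4]
  simp only [map_mul, map_add, map_sub, map_neg, map_ofNat, map_pow, eval_X,
    Matrix.cons_val_zero, Matrix.cons_val_one, Matrix.head_cons]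
  norm_num

private lemma ev25 : eval (![2,-1] : Fin 2 → ℂ) PG5 = 32 := by
  simp only [PG5]
  simp only [map_mul, map_add, map_sub, map_neg, map_ofNat, map_pow, eval_X,
    Matrix.cons_val_zero, Matrix.cons_val_one, Matrix.head_cons]
  norm_num

private lemma ev26 : eval (![2,-1] : Fin 2 → ℂ) PG6 = -64 := by
  simp only [PG6]
  simp only [map_mul, map_add, map_sub, map_neg, map_ofNat, map_pow, eval_X,
    Matrix.cons_val_zero, Matrix.cons_val_one, Matrix.head_cons]
  norm_num

private lemma ev27 : eval (![2,-1] : Fin 2 → ℂ) PG7 = -672 := by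
  simp only [PG7]
  simp only [map_mul, map_add, map_sub, map_neg, map_ofNat, map_pow, eval_X,
    Matrix.cons_val_zero, Matrix.cons_val_one, Matrix.head_cons]
  norm_num

private lemma ev31 : eval (![-3,3] : Fin 2 → ℂ) PG1 = -66096 := by
  simp only [PG1]
  simp only [map_mul, map_add, map_sub, map_neg, map_ofNat, map_pow, eval_X,
    Matrix.cons_val_zero, Matrix.cons_val_one, Matrix.head_cons]
  norm_num

private lemma ev32 : eval (![-3,3] : Fin 2 → ℂ) PG2 = 26082 := by
  simp only [PG2]
  simp only [map_mul, map_add, map_sub, map_neg, map_ofNat, map_pow, eval_X,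
    Matrix.cons_val_zero, Matrix.cons_val_one, Matrix.head_cons]
  norm_num

private lemma ev33 : eval (![-3,3] : Fin 2 → ℂ) PG3 = -7668 := by
  simp only [PG3]
  simp only [map_mul, map_add, map_sub, map_neg, map_ofNat, map_pow, eval_X,
    Matrix.cons_val_zero, Matrix.cons_val_one, Matrix.head_cons]
  norm_num

private lemma ev34 : eval (![-3,3] : Fin 2 → ℂ) PG4 = -7290 := by
  simp only [PG4]
  simp only [map_mul, map_add, map_sub, map_neg, map_ofNat, map_pow, eval_X,
    Matrix.cons_val_zero, Matrix.cons_val_one, Matrix.head_cons]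
  norm_num

private lemma ev35 : eval (![-3,3] : Fin 2 → ℂ) PG5 = 102870 := by
  simp only [PG5]
  simp only [map_mul, map_add, map_sub, map_neg, map_ofNat, map_pow, eval_X,
    Matrix.cons_val_zero, Matrix.cons_val_one, Matrix.head_cons]
  norm_num

private lemma ev36 : eval (![-3,3] : Fin 2 → ℂ) PG6 = -49680 := by
  simp only [PG6]
  simp only [map_mul, map_add, map_sub, map_neg, map_ofNat, map_pow, eval_X,
    Matrix.cons_val_zero, Matrix.cons_val_one, Matrix.head_cons]
  norm_num

private lemma ev37 : eval (![-3,3] : Fin 2 → ℂ) PG7 = -358560 := by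
  simp only [PG7]
  simp only [map_mul, map_add, map_sub, map_neg, map_ofNat, map_pow, eval_X,
    Matrix.cons_val_zero, Matrix.cons_val_one, Matrix.head_cons]
  norm_num

private lemma ev41 : eval (![-1,3] : Fin 2 → ℂ) PG1 = -1030800 := by
  simp only [PG1]
  simp only [map_mul, map_add, map_sub, map_neg, map_ofNat, map_pow, eval_X,
    Matrix.cons_val_zero, Matrix.cons_val_one, Matrix.head_cons]
  norm_num

private lemma ev42 : eval (![-1,3] : Fin 2 → ℂ) PG2 = 211130 := by
  simp only [PG2]
  simp only [map_mul, map_add, map_sub, map_neg, map_ofNat, map_pow, eval_X,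
    Matrix.cons_val_zero, Matrix.cons_val_one, Matrix.head_cons]
  norm_num

private lemma ev43 : eval (![-1,3] : Fin 2 → ℂ) PG3 = -133172 := by
  simp only [PG3]
  simp only [map_mul, map_add, map_sub, map_neg, map_ofNat, map_pow, eval_X,
    Matrix.cons_val_zero, Matrix.cons_val_one, Matrix.head_cons]
  norm_num

private lemma ev44 : eval (![-1,3] : Fin 2 → ℂ) PG4 = -29106 := by
  simp only [PG4]
  simp only [map_mul, map_add, map_sub, map_neg, map_ofNat, map_pow, eval_X,
    Matrix.cons_val_zero, Matrix.cons_val_one, Matrix.head_cons]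
  norm_num

private lemma ev45 : eval (![-1,3] : Fin 2 → ℂ) PG5 = -108850 := by
  simp only [PG5]
  simp only [map_mul, map_add, map_sub, map_neg, map_ofNat, map_pow, eval_X,
    Matrix.cons_val_zero, Matrix.cons_val_one, Matrix.head_cons]
  norm_num

private lemma ev46 : eval (![-1,3] : Fin 2 → ℂ) PG6 = 42140 := by
  simp only [PG6]
  simp only [map_mul, map_add, map_sub, map_neg, map_ofNat, map_pow, eval_X,
    Matrix.cons_val_zero, Matrix.cons_val_one, Matrix.head_cons]
  norm_num

private lemma ev47 : eval (![-1,3] : Fin 2 → ℂ) PG7 = -252224 := by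
  simp only [PG7]
  simp only [map_mul, map_add, map_sub, map_neg, map_ofNat, map_pow, eval_X,
    Matrix.cons_val_zero, Matrix.cons_val_one, Matrix.head_cons]
  norm_num

private lemma ev51 : eval (![-3,-2] : Fin 2 → ℂ) PG1 = -4790016 := by
  simp only [PG1]
  simp only [map_mul, map_add, map_sub, map_neg, map_ofNat, map_pow, eval_X,
    Matrix.cons_val_zero, Matrix.cons_val_one, Matrix.head_cons]
  norm_num

private lemma ev52 : eval (![-3,-2] : Fin 2 → ℂ) PG2 = 830592 := by
  simp only [PG2]
  simp only [map_mul, map_add, map_sub, map_neg, map_ofNat, map_pow, eval_X,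
    Matrix.cons_val_zero, Matrix.cons_val_one, Matrix.head_cons]
  norm_num

private lemma ev53 : eval (![-3,-2] : Fin 2 → ℂ) PG3 = -1058688 := by
  simp only [PG3]
  simp only [map_mul, map_add, map_sub, map_neg, map_ofNat, map_pow, eval_X,
    Matrix.cons_val_zero, Matrix.cons_val_one, Matrix.head_cons]
  norm_num

private lemma ev54 : eval (![-3,-2] : Fin 2 → ℂ) PG4 = 51840 := by
  simp only [PG4]
  simp only [map_mul, map_add, map_sub, map_neg, map_ofNat, map_pow, eval_X,
    Matrix.cons_val_zero, Matrix.cons_val_one, Matrix.head_cons]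
  norm_num

private lemma ev55 : eval (![-3,-2] : Fin 2 → ℂ) PG5 = 766080 := by
  simp only [PG5]
  simp only [map_mul, map_add, map_sub, map_neg, map_ofNat, map_pow, eval_X,
    Matrix.cons_val_zero, Matrix.cons_val_one, Matrix.head_cons]
  norm_num

private lemma ev56 : eval (![-3,-2] : Fin 2 → ℂ) PG6 = -371520 := by
  simp only [PG6]
  simp only [map_mul, map_add, map_sub, map_neg, map_ofNat, map_pow, eval_X,
    Matrix.cons_val_zero, Matrix.cons_val_one, Matrix.head_cons]
  norm_num

private lemma ev57 : eval (![-3,-2] : Fin 2 → ℂ) PG7 = -541440 := by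
  simp only [PG7]
  simp only [map_mul, map_add, map_sub, map_neg, map_ofNat, map_pow, eval_X,
    Matrix.cons_val_zero, Matrix.cons_val_one, Matrix.head_cons]
  norm_num

private lemma ev61 : eval (![3,-2] : Fin 2 → ℂ) PG1 = 0 := by
  simp only [PG1]
  simp only [map_mul, map_add, map_sub, map_neg, map_ofNat, map_pow, eval_X,
    Matrix.cons_val_zero, Matrix.cons_val_one, Matrix.head_cons]
  norm_num

private lemma ev62 : eval (![3,-2] : Fin 2 → ℂ) PG2 = 288 := by
  simp only [PG2]
  simp only [map_mul, map_add, map_sub, map_neg, map_ofNat, map_pow, eval_X,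
    Matrix.cons_val_zero, Matrix.cons_val_one, Matrix.head_cons]
  norm_num

private lemma ev63 : eval (![3,-2] : Fin 2 → ℂ) PG3 = -576 := by
  simp only [PG3]
  simp only [map_mul, map_add, map_sub, map_neg, map_ofNat, map_pow, eval_X,
    Matrix.cons_val_zero, Matrix.cons_val_one, Matrix.head_cons]
  norm_num

private lemma ev64 : eval (![3,-2] : Fin 2 → ℂ) PG4 = 0 := by
  simp only [PG4]
  simp only [map_mul, map_add, map_sub, map_neg, map_ofNat, map_pow, eval_X,
    Matrix.cons_val_zero, Matrix.cons_val_one, Matrix.head_cons]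
  norm_num

private lemma ev65 : eval (![3,-2] : Fin 2 → ℂ) PG5 = -288 := by
  simp only [PG5]
  simp only [map_mul, map_add, map_sub, map_neg, map_ofNat, map_pow, eval_X,
    Matrix.cons_val_zero, Matrix.cons_val_one, Matrix.head_cons]
  norm_num

private lemma ev66 : eval (![3,-2] : Fin 2 → ℂ) PG6 = 288 := by
  simp only [PG6]
  simp only [map_mul, map_add, map_sub, map_neg, map_ofNat, map_pow, eval_X,
    Matrix.cons_val_zero, Matrix.cons_val_one, Matrix.head_cons]
  norm_num

private lemma ev67 : eval (![3,-2] : Fin 2 → ℂ) PG7 = 0 := by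
  simp only [PG7]
  simp only [map_mul, map_add, map_sub, map_neg, map_ofNat, map_pow, eval_X,
    Matrix.cons_val_zero, Matrix.cons_val_one, Matrix.head_cons]
  norm_num


/-- The polynomials `PG1, …, PG7` are linearly independent over ℂ in `ℂ[h1, h2]`, and
`PG8` lies in their ℂ-linear span (so the family `{PG1, …, PG8}` is linearly dependent). -/
theorem G2_projections_linear_relations :
    LinearIndependent ℂ ![PG1, PG2, PG3, PG4, PG5, PG6, PG7] ∧
    PG8 ∈ Submodule.span ℂ ({PG1, PG2, PG3, PG4, PG5, PG6, PG7} :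
      Set (MvPolynomial (Fin 2) ℂ)) := by
  constructor
  · rw [Fintype.linearIndependent_iff]
    intro g hg
    have hg' : g 0 • PG1 + g 1 • PG2 + g 2 • PG3 + g 3 • PG4 + g 4 • PG5 +
        g 5 • PG6 + g 6 • PG7 = 0 := by
      have := hg
      simp only [Fin.sum_univ_seven, Matrix.cons_val_zero, Matrix.cons_val_one,
        Matrix.head_cons, Matrix.cons_val_two, Matrix.tail_cons, Matrix.cons_val_three,
        Matrix.cons_val_four, Matrix.cons_val_fin_one, Matrix.cons_val] at this
      convert this using 2
    have e0 := congrArg (eval (![3,1] : Fin 2 → ℂ)) hg'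
    simp only [map_add, smul_eval, map_zero, ev01, ev02, ev03, ev04, ev05, ev06, ev07] at e0
    have e1 := congrArg (eval (![-1,-3] : Fin 2 → ℂ)) hg'
    simp only [map_add, smul_eval, map_zero, ev11, ev12, ev13, ev14, ev15, ev16, ev17] at e1
    have e2 := congrArg (eval (![2,-1] : Fin 2 → ℂ)) hg'
    simp only [map_add, smul_eval, map_zero, ev21, ev22, ev23, ev24, ev25, ev26, ev27] at e2
    have e3 := congrArg (eval (![-3,3] : Fin 2 → ℂ)) hg'
    simp only [map_add, smul_eval, map_zero, ev31, ev32, ev33, ev34, ev35, ev36, ev37] at e3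
    have e4 := congrArg (eval (![-1,3] : Fin 2 → ℂ)) hg'
    simp only [map_add, smul_eval, map_zero, ev41, ev42, ev43, ev44, ev45, ev46, ev47] at e4
    have e5 := congrArg (eval (![-3,-2] : Fin 2 → ℂ)) hg'
    simp only [map_add, smul_eval, map_zero, ev51, ev52, ev53, ev54, ev55, ev56, ev57] at e5
    have e6 := congrArg (eval (![3,-2] : Fin 2 → ℂ)) hg'
    simp only [map_add, smul_eval, map_zero, ev61, ev62, ev63, ev64, ev65, ev66, ev67] at e6
    intro i
    fin_cases i
    · show g 0 = 0
      linear_combination ((-12414739807901)/544648765091530176 : ℂ) * e0 + (209561978507/2881739497838784 : ℂ) * e1 + (47569262413709/2881739497838784 : ℂ) * e2 + (8177656150831/583552248312353760 : ℂ) * e3 + ((-2080402477)/60036239538308 : ℂ) * e4 + (9892975961789/1556139328832943360 : ℂ) * e5 + (99177800626939/77806966441647168 : ℂ) * e6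
    · show g 1 = 0
      linear_combination ((-456748243241)/1620978467534316 : ℂ) * e0 + (334549439161/360217437229848 : ℂ) * e1 + (49420953046017/240144958153232 : ℂ) * e2 + (3040182489121/16209784675343160 : ℂ) * e3 + ((-19721385554)/45027179653731 : ℂ) * e4 + (638520502357/9605798326129280 : ℂ) * e5 + (46992785962711/3241956935068632 : ℂ) * e6
    · show g 2 = 0
      linear_combination ((-13088275261867)/90774794181921696 : ℂ) * e0 + (701680456519/1440869748919392 : ℂ) * e1 + (50960713433233/480289916306464 : ℂ) * e2 + (10088088916667/97258708052058960 : ℂ) * e3 + ((-82813198579)/360217437229848 : ℂ) * e4 + (3712363735229/129678277402745280 : ℂ) * e5 + (88323078508463/12967827740274528 : ℂ) * e6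
    · show g 3 = 0
      linear_combination ((-1791969523349)/3241956935068632 : ℂ) * e0 + (1984317562861/1080652311689544 : ℂ) * e1 + (139124214964205/360217437229848 : ℂ) * e2 + (7493003374457/18236007759761055 : ℂ) * e3 + ((-462327515621)/540326155844772 : ℂ) * e4 + (2907913975739/24314677013014740 : ℂ) * e5 + (870515642921761/38903483220823584 : ℂ) * e6
    · show g 4 = 0
      linear_combination ((-312077503361)/45387397090960848 : ℂ) * e0 + (32505180259/720434874459696 : ℂ) * e1 + (635168526391/60036239538308 : ℂ) * e2 + (348965475841/24314677013014740 : ℂ) * e3 + ((-2695471223)/90054359307462 : ℂ) * e4 + ((-1691279986189)/259356554805490560 : ℂ) * e5 + (13835634727925/4322609246758176 : ℂ) * e6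
    · show g 5 = 0
      linear_combination ((-38212622155)/2836712318185053 : ℂ) * e0 + (2711948269/30018119769154 : ℂ) * e1 + (1020108623195/60036239538308 : ℂ) * e2 + (832736200493/24314677013014740 : ℂ) * e3 + ((-3106199603)/60036239538308 : ℂ) * e4 + ((-255117413057)/16209784675343160 : ℂ) * e5 + (696380527811/120072479076616 : ℂ) * e6
    · show g 6 = 0
      linear_combination ((-47190337669)/22693698545480424 : ℂ) * e0 + (2461103189/360217437229848 : ℂ) * e1 + (1194231925371/480289916306464 : ℂ) * e2 + ((-11870629613)/4052446168835790 : ℂ) * e3 + ((-824493697)/180108718614924 : ℂ) * e4 + (40173476297/43226092467581760 : ℂ) * e5 + (1081362699517/3241956935068632 : ℂ) * e6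
  · have hrel : PG8 = ((-1):ℂ) • PG1 + ((-6):ℂ) • PG2 + ((-9):ℂ) • PG4 + (6:ℂ) • PG5 := by
      simp only [smul_eq_C_mul, map_neg, map_one, map_ofNat, PG1, PG2, PG4, PG5, PG8]
      ring
    rw [hrel]
    have m1 : PG1 ∈ ({PG1, PG2, PG3, PG4, PG5, PG6, PG7} : Set (MvPolynomial (Fin 2) ℂ)) := by simp
    have m2 : PG2 ∈ ({PG1, PG2, PG3, PG4, PG5, PG6, PG7} : Set (MvPolynomial (Fin 2) ℂ)) := by simp
    have m4 : PG4 ∈ ({PG1, PG2, PG3, PG4, PG5, PG6, PG7} : Set (MvPolynomial (Fin 2) ℂ)) := by simp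
    have m5 : PG5 ∈ ({PG1, PG2, PG3, PG4, PG5, PG6, PG7} : Set (MvPolynomial (Fin 2) ℂ)) := by simp
    exact Submodule.add_mem _ (Submodule.add_mem _ (Submodule.add_mem _
      (Submodule.smul_mem _ _ (Submodule.subset_span m1))
      (Submodule.smul_mem _ _ (Submodule.subset_span m2)))
      (Submodule.smul_mem _ _ (Submodule.subset_span m4)))
      (Submodule.smul_mem _ _ (Submodule.subset_span m5))
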